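/- arXiv:2107.07963 — 2 statements merged into one kernel-verified Lean document; each statement's English description precedes it below -/
import Mathlib

section
/- Let γ > 0, β > 0, and for each n ∈ ℕ with n > γ set α_n = 1 − γ/n. Fix u > 0. Then (1/n²)·(β/(1−α_n))·( ⌊nu⌋ − α_n·(1−α_n^{⌊nu⌋})/(1−α_n) ) converges, as n → ∞, to C_W(u) = β·γ^{-2}·(γu + e^{-γu} − 1). -/
open Filter Real

lemma floor_div_tendsto (u : ℝ) (hu : 0 < u) :
    Tendsto (fun n : ℕ => (⌊(n : ℝ) * u⌋₊ : ℝ) / n) atTop (nhds u) := by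
  have hlow : Tendsto (fun n : ℕ => u - 1 / (n : ℝ)) atTop (nhds u) := by
    have := tendsto_one_div_atTop_nhds_zero_nat (𝕜 := ℝ)
    simpa using (tendsto_const_nhds.sub this : Tendsto (fun n : ℕ => u - 1/(n:ℝ)) atTop (nhds (u - 0)))
  refine tendsto_of_tendsto_of_tendsto_of_le_of_le' hlow tendsto_const_nhds ?_ ?_
  · filter_upwards [eventually_ge_atTop 1] with n hn
    have hn0 : (0:ℝ) < n := by exact_mod_cast hn
    rw [le_div_iff₀ hn0]
    have h2 : (n:ℝ) * u - 1 < ⌊(n : ℝ) * u⌋₊ := Nat.sub_one_lt_floor _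
    have h3 : (u - 1 / (n:ℝ)) * n = (n:ℝ) * u - 1 := by field_simp
    linarith
  · filter_upwards [eventually_ge_atTop 1] with n hn
    have hn0 : (0:ℝ) < n := by exact_mod_cast hn
    rw [div_le_iff₀ hn0]
    have := Nat.floor_le (by positivity : (0:ℝ) ≤ (n:ℝ) * u)
    linarith [this]

lemma pow_tendsto (γ u : ℝ) (hγ : 0 < γ) (hu : 0 < u) :
    Tendsto (fun n : ℕ => (1 - γ / n) ^ ⌊(n : ℝ) * u⌋₊) atTop (nhds (Real.exp (-γ * u))) := by
  have hn_log : Tendsto (fun n : ℕ => (n : ℝ) * Real.log (1 - γ / n)) atTop (nhds (-γ)) := by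
    have := (Real.tendsto_mul_log_one_add_div_atTop (-γ)).comp
      (tendsto_natCast_atTop_atTop (R := ℝ))
    simpa [Function.comp_def, sub_eq_add_neg, neg_div] using this
  have hratio := floor_div_tendsto u hu
  have hmain : Tendsto (fun n : ℕ => (⌊(n : ℝ) * u⌋₊ : ℝ) * Real.log (1 - γ / n))
      atTop (nhds (u * (-γ))) := by
    have h := hratio.mul hn_log
    refine h.congr' ?_
    filter_upwards [eventually_ge_atTop 1] with n hn
    have hn0 : (n:ℝ) ≠ 0 := by positivity
    field_simp
  have hexp := (Real.continuous_exp.tendsto _).comp hmain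
  have heq : Real.exp (u * (-γ)) = Real.exp (-γ * u) := by ring_nf
  rw [heq] at hexp
  refine hexp.congr' ?_
  have : ∀ᶠ n : ℕ in atTop, 0 < 1 - γ / (n : ℝ) := by
    have : Tendsto (fun n : ℕ => 1 - γ / (n : ℝ)) atTop (nhds 1) := by
      have := tendsto_one_div_atTop_nhds_zero_nat (𝕜 := ℝ)
      have h2 : Tendsto (fun n : ℕ => γ / (n : ℝ)) atTop (nhds 0) := by
        simpa [div_eq_mul_inv] using this.const_mul γ
      simpa using (tendsto_const_nhds.sub h2 : Tendsto (fun n : ℕ => 1 - γ/(n:ℝ)) atTop (nhds (1 - 0)))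
    exact this.eventually (eventually_gt_nhds (by norm_num))
  filter_upwards [this] with n hn
  rw [Function.comp, ← Real.exp_log hn, ← Real.exp_nat_mul, Real.exp_log hn]

theorem stmt4 (γ β u : ℝ) (hγ : 0 < γ) (hβ : 0 < β) (hu : 0 < u) :
    Filter.Tendsto (fun n : ℕ =>
      (1 / (n : ℝ) ^ 2) * (β / (1 - (1 - γ / n))) *
        ((⌊(n : ℝ) * u⌋₊ : ℝ) -
          (1 - γ / n) * (1 - (1 - γ / n) ^ ⌊(n : ℝ) * u⌋₊) / (1 - (1 - γ / n))))
      Filter.atTop (nhds (β * γ⁻¹ ^ 2 * (γ * u + Real.exp (-γ * u) - 1))) := by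
  have hratio := floor_div_tendsto u hu
  have hpow := pow_tendsto γ u hγ hu
  have honedivn : Tendsto (fun n : ℕ => γ / (n : ℝ)) atTop (nhds 0) := by
    simpa [div_eq_mul_inv] using (tendsto_one_div_atTop_nhds_zero_nat (𝕜 := ℝ)).const_mul γ
  have hα : Tendsto (fun n : ℕ => 1 - γ / (n : ℝ)) atTop (nhds 1) := by
    simpa using (tendsto_const_nhds.sub honedivn :
      Tendsto (fun n : ℕ => 1 - γ/(n:ℝ)) atTop (nhds (1 - 0)))
  -- simplified form
  have hlim : Tendsto (fun n : ℕ =>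
      (β / γ) * ((⌊(n : ℝ) * u⌋₊ : ℝ) / n) -
        (β / γ ^ 2) * ((1 - γ / n) * (1 - (1 - γ / n) ^ ⌊(n : ℝ) * u⌋₊)))
      atTop (nhds ((β / γ) * u - (β / γ ^ 2) * (1 * (1 - Real.exp (-γ * u))))) := by
    exact ((hratio.const_mul _).sub
      ((hα.mul (tendsto_const_nhds.sub hpow)).const_mul _))
  have hval : (β / γ) * u - (β / γ ^ 2) * (1 * (1 - Real.exp (-γ * u)))
      = β * γ⁻¹ ^ 2 * (γ * u + Real.exp (-γ * u) - 1) := by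
    field_simp
    ring
  rw [hval] at hlim
  refine hlim.congr' ?_
  filter_upwards [eventually_ge_atTop 1] with n hn
  have hn0 : (n:ℝ) ≠ 0 := by positivity
  have h1 : (1:ℝ) - (1 - γ / n) = γ / n := by ring
  rw [h1]
  have hγn : γ / (n:ℝ) ≠ 0 := div_ne_zero (ne_of_gt hγ) hn0
  field_simp
end

section
/- Let γ > 0, x > 0, β > 0, and for n large set α_n = 1 − γ/n and let x_n → x with x_n > 0. Let φ_n(t) = exp( −i·t·√n·x_n + (β + α_n·n·x_n)·(e^{it/√n} − 1) ) for t ∈ ℝ. Then φ_n(t) → exp(−x·t²/2) for every t ∈ ℝ as n → ∞. -/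
open Filter Complex

private lemma sqrtN_tendsto : Tendsto (fun n : ℕ => Real.sqrt n) atTop atTop := by
  have h : Tendsto (fun y : ℝ => y ^ (1/2 : ℝ)) atTop atTop :=
    tendsto_rpow_atTop (by norm_num)
  exact (h.comp tendsto_natCast_atTop_atTop).congr fun n => (Real.sqrt_eq_rpow _).symm

private lemma key (t : ℝ) : Tendsto (fun n : ℕ => (n : ℂ) *
    (Complex.exp (Complex.I * t / (Real.sqrt n : ℂ)) - 1 - Complex.I * t / (Real.sqrt n : ℂ)))
    atTop (nhds (-(t^2/2 : ℂ))) := by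
  set z : ℕ → ℂ := fun n => Complex.I * t / (Real.sqrt n : ℂ) with hz
  have hr : Tendsto (fun n : ℕ => (n : ℂ) *
      (Complex.exp (z n) - 1 - z n - z n ^ 2 / 2)) atTop (nhds 0) := by
    have hbound : Tendsto (fun n : ℕ => |t|^3 / Real.sqrt n) atTop (nhds 0) :=
      tendsto_const_nhds.div_atTop sqrtN_tendsto
    refine squeeze_zero_norm' ?_ hbound
    filter_upwards [sqrtN_tendsto.eventually_ge_atTop (max 1 |t|),
      eventually_ge_atTop 1] with n hn hn1
    have hs1 : (1:ℝ) ≤ Real.sqrt n := le_trans (le_max_left _ _) hn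
    have hspos : (0:ℝ) < Real.sqrt n := lt_of_lt_of_le one_pos hs1
    have hnz : ‖z n‖ = |t| / Real.sqrt n := by
      simp [hz, map_div₀, Complex.norm_natCast, Complex.norm_real,
        abs_of_pos hspos]
    have hzle : ‖z n‖ ≤ 1 := by
      rw [hnz]; rw [div_le_one hspos]; exact le_trans (le_max_right _ _) hn
    have hb := Complex.exp_bound (x := z n) hzle (n := 3) (by norm_num)
    norm_num [Nat.factorial] at hb
    have hsum : ∑ m ∈ Finset.range 3, z n ^ m / m.factorial = 1 + z n + z n ^ 2 / 2 := by
      simp [Finset.sum_range_succ]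
    rw [hsum] at hb
    have hb2 : ‖Complex.exp (z n) - 1 - z n - z n ^ 2 / 2‖ ≤ ‖z n‖ ^ 3 := by
      calc ‖Complex.exp (z n) - 1 - z n - z n ^ 2 / 2‖
          = ‖Complex.exp (z n) - (1 + z n + z n ^ 2 / 2)‖ := by
            congr 1; ring
        _ ≤ ‖z n‖ ^ 3 := by
            have h0 : (0:ℝ) ≤ ‖z n‖ ^ 3 := by positivity
            nlinarith [h0, hb]
    rw [norm_mul, Complex.norm_natCast]
    have hsq : Real.sqrt n ^ 2 = (n:ℝ) := Real.sq_sqrt (Nat.cast_nonneg n)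
    calc (n:ℝ) * ‖Complex.exp (z n) - 1 - z n - z n ^ 2 / 2‖
        ≤ (n:ℝ) * ‖z n‖ ^ 3 := mul_le_mul_of_nonneg_left hb2 (Nat.cast_nonneg n)
      _ = |t|^3 / Real.sqrt n := by
          rw [hnz, div_pow]
          have h3 : Real.sqrt n ^ 3 = n * Real.sqrt n := by
            rw [pow_succ, hsq]
          rw [h3]
          rw [eq_div_iff hspos.ne']
          field_simp
  have heq : ∀ᶠ n : ℕ in atTop, (n : ℂ) *
      (Complex.exp (z n) - 1 - z n - z n ^ 2 / 2) + (-(t^2/2 : ℂ)) =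
      (n : ℂ) * (Complex.exp (z n) - 1 - z n) := by
    filter_upwards [eventually_ge_atTop 1] with n hn
    have hnR : (0:ℝ) < n := by exact_mod_cast hn
    have hnnz : (n : ℂ) ≠ 0 := by exact_mod_cast hnR.ne'
    have hsq : ((Real.sqrt n : ℝ) : ℂ) ^ 2 = (n : ℂ) := by
      norm_cast
      exact_mod_cast Real.sq_sqrt (Nat.cast_nonneg (α := ℝ) n)
    have hsnz : ((Real.sqrt n : ℝ) : ℂ) ≠ 0 := by
      simpa using (Real.sqrt_pos.mpr hnR).ne'
    have hz2 : z n ^ 2 = -(t:ℂ)^2 / n := by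
      rw [hz]
      show (Complex.I * t / (Real.sqrt n : ℂ)) ^ 2 = -(t:ℂ)^2 / n
      rw [div_pow, mul_pow, Complex.I_sq, hsq]
      ring
    have h4 : (n:ℂ) * z n ^ 2 = -(t:ℂ)^2 := by
      rw [hz2]; field_simp
    linear_combination (-(1:ℂ)/2) * h4
  have := (hr.add_const (-(t^2/2 : ℂ))).congr' heq
  simpa using this

theorem stmt7 (γ x β : ℝ) (hγ : 0 < γ) (hx : 0 < x) (hβ : 0 < β)
    (xseq : ℕ → ℝ) (hpos : ∀ n, 0 < xseq n)
    (hlim : Filter.Tendsto xseq Filter.atTop (nhds x)) (t : ℝ) :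
    Filter.Tendsto (fun n : ℕ =>
      Complex.exp (-Complex.I * (t : ℂ) * (Real.sqrt n : ℂ) * (xseq n : ℂ)
        + ((β + (1 - γ / (n : ℝ)) * (n : ℝ) * xseq n : ℝ) : ℂ)
          * (Complex.exp (Complex.I * (t : ℂ) / (Real.sqrt n : ℂ)) - 1)))
      Filter.atTop (nhds (Complex.exp (-((x * t ^ 2 / 2 : ℝ) : ℂ)))) := by
  set z : ℕ → ℂ := fun n => Complex.I * t / (Real.sqrt n : ℂ) with hz
  have hxseqC : Tendsto (fun n => ((xseq n : ℝ) : ℂ)) atTop (nhds (x : ℂ)) :=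
    (Complex.continuous_ofReal.tendsto x).comp hlim
  have hztend : Tendsto z atTop (nhds 0) := by
    have hbound : Tendsto (fun n : ℕ => |t| / Real.sqrt n) atTop (nhds 0) :=
      tendsto_const_nhds.div_atTop sqrtN_tendsto
    refine squeeze_zero_norm' ?_ hbound
    filter_upwards [eventually_ge_atTop 1] with n hn
    have hnR : (0:ℝ) < n := by exact_mod_cast hn
    have hspos : (0:ℝ) < Real.sqrt n := Real.sqrt_pos.mpr hnR
    simp [hz, map_div₀, Complex.norm_real, abs_of_pos hspos, le_refl]
  have hE : Tendsto (fun n => Complex.exp (z n) - 1) atTop (nhds 0) := by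
    have := (Complex.continuous_exp.tendsto 0).comp hztend
    simpa using this.sub_const 1
  have hexp : Tendsto (fun n : ℕ =>
      (-Complex.I * (t : ℂ) * (Real.sqrt n : ℂ) * (xseq n : ℂ)
        + ((β + (1 - γ / (n : ℝ)) * (n : ℝ) * xseq n : ℝ) : ℂ)
          * (Complex.exp (z n) - 1)))
      atTop (nhds (-((x * t ^ 2 / 2 : ℝ) : ℂ))) := by
    have h1 : Tendsto (fun n : ℕ => (((β : ℝ) : ℂ) - (γ : ℂ) * (xseq n : ℂ)) *
        (Complex.exp (z n) - 1)) atTop (nhds 0) := by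
      have hc : Tendsto (fun _ : ℕ => ((β : ℝ) : ℂ)) atTop (nhds ((β : ℝ) : ℂ)) :=
        tendsto_const_nhds
      have := (hc.sub (hxseqC.const_mul (γ : ℂ))).mul hE
      simpa using this
    have h2 : Tendsto (fun n : ℕ => (xseq n : ℂ) *
        ((n : ℂ) * (Complex.exp (z n) - 1 - z n))) atTop
        (nhds ((x : ℂ) * (-(t^2/2 : ℂ)))) := hxseqC.mul (key t)
    have hsum := h1.add h2
    rw [zero_add] at hsum
    have hval : (x : ℂ) * (-(t^2/2 : ℂ)) = -((x * t ^ 2 / 2 : ℝ) : ℂ) := by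
      push_cast; ring
    rw [hval] at hsum
    refine hsum.congr' ?_
    filter_upwards [eventually_ge_atTop 1] with n hn
    have hnR : (0:ℝ) < n := by exact_mod_cast hn
    have hnnz : (n : ℂ) ≠ 0 := by exact_mod_cast hnR.ne'
    have hsnz : ((Real.sqrt n : ℝ) : ℂ) ≠ 0 := by
      simpa using (Real.sqrt_pos.mpr hnR).ne'
    have hsq : ((Real.sqrt n : ℝ) : ℂ) ^ 2 = (n : ℂ) := by
      norm_cast
      exact_mod_cast Real.sq_sqrt (Nat.cast_nonneg (α := ℝ) n)
    have hnzz : (n : ℂ) * z n = Complex.I * t * ((Real.sqrt n : ℝ) : ℂ) := by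
      rw [hz]
      show (n : ℂ) * (Complex.I * t / (Real.sqrt n : ℂ)) = _
      rw [mul_div_assoc', div_eq_iff hsnz]
      linear_combination (-(Complex.I * (t:ℂ))) * hsq
    have hγn : (1 - (γ:ℂ)/(n:ℂ)) * (n:ℂ) = (n:ℂ) - γ := by
      field_simp
    push_cast
    linear_combination (-(xseq n : ℂ)) * hnzz +
      (-(Complex.exp (z n) - 1) * (xseq n : ℂ)) * hγn
  exact (Complex.continuous_exp.tendsto _).comp hexp
end
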